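/- Let X be a topological space. Then X satisfies S₁(Γ,Γ) if and only if for every function φ : X → Fr^ℕ such that the multivalued map Φ : X ⇒ Fr^ℕ defined by Φ(x) = ∏_{k∈ℕ} (P(φ(x)(k)) ∩ Fr) = {A ∈ Fr^ℕ : A(k) ⊆ φ(x)(k) for all k} is lower semicontinuous (Fr^ℕ with the product topology), there exists f ∈ ℕ^ℕ such that for every x ∈ X, f(k) ∈ φ(x)(k) for all but finitely many k. -/

import Mathlib

open Set Filter Topology

attribute [local instance] Classical.propDecidable

/-- The Cantor space `{0,1}^ℕ`, representing the power set `P(ℕ)`. -/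
abbrev PN : Type := ℕ → Bool

/-- The Fréchet filter: the set of all cofinite subsets of ℕ, as a subspace of `P(ℕ)`. -/
def Fr : Set PN := {A : PN | {n : ℕ | A n = false}.Finite}

/-- Lower semicontinuity of a multivalued map `Φ : X ⇒ Y`. -/
def LSC {X Y : Type*} [TopologicalSpace X] [TopologicalSpace Y] (Φ : X → Set Y) : Prop :=
  ∀ V : Set Y, IsOpen V → IsOpen {x : X | (Φ x ∩ V).Nonempty}

/-- S₁(Γ,Γ), γ-covers taken in the indexed sense. -/
def S1GammaGamma (X : Type*) [TopologicalSpace X] : Prop :=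
  ∀ U : ℕ → ℕ → Set X, (∀ k n, IsOpen (U k n)) →
    (∀ k, ∀ x : X, ∀ᶠ n in atTop, x ∈ U k n) →
    ∃ f : ℕ → ℕ, ∀ x : X, ∀ᶠ k in atTop, x ∈ U k (f k)

/-- Theorem: `X` satisfies S₁(Γ,Γ) iff for every `φ : X → Fr^ℕ` such that
`Φ(x) = ∏ₖ (P(φ(x)(k)) ∩ Fr)` is lsc, there is `f ∈ ℕ^ℕ` with `f(k) ∈ φ(x)(k)` for every
`x` and all but finitely many `k`. -/
theorem s1GammaGamma_iff (X : Type*) [TopologicalSpace X] :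
    S1GammaGamma X ↔
      ∀ φ : X → (ℕ → ↥Fr),
        LSC (fun x : X => {A : ℕ → ↥Fr |
          ∀ k, ∀ n, (A k : PN) n = true → (φ x k : PN) n = true}) →
        ∃ f : ℕ → ℕ, ∀ x : X, ∀ᶠ k in atTop, (φ x k : PN) (f k) = true := by
  constructor
  · -- forward direction
    intro hS φ hlsc
    have hopen : ∀ k n, IsOpen {x : X | (φ x k : PN) n = true} := by
      intro k n
      have hc : Continuous fun B : ℕ → ↥Fr => (B k : PN) n :=
        ((continuous_apply n).comp continuous_subtype_val).comp (continuous_apply k)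
      have hV : IsOpen {A : ℕ → ↥Fr | (A k : PN) n = true} :=
        hc.isOpen_preimage {b | b = true} (isOpen_discrete _)
      have h2 := hlsc _ hV
      have heq : {x : X | (({A : ℕ → ↥Fr |
            ∀ k n, (A k : PN) n = true → (φ x k : PN) n = true}) ∩
            {A : ℕ → ↥Fr | (A k : PN) n = true}).Nonempty}
          = {x : X | (φ x k : PN) n = true} := by
        ext x
        simp only [Set.mem_setOf_eq]
        constructor
        · rintro ⟨A, hA, hAV⟩
          exact hA k n hAV
        · intro hx
          exact ⟨φ x, fun k n h => h, hx⟩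
      rw [heq] at h2
      exact h2
    have hγ : ∀ k, ∀ x : X, ∀ᶠ n in atTop, x ∈ {x : X | (φ x k : PN) n = true} := by
      intro k x
      have hfin : {n : ℕ | ((φ x k : PN)) n = false}.Finite := (φ x k).2
      have := Set.Finite.eventually_cofinite_notMem hfin
      rw [Nat.cofinite_eq_atTop] at this
      filter_upwards [this] with n hn
      exact eq_true_of_ne_false hn
    obtain ⟨f, hf⟩ := hS (fun k n => {x : X | (φ x k : PN) n = true}) hopen hγ
    exact ⟨f, hf⟩
  · -- backward direction
    intro h U hUopen hUγ
    have hFr : ∀ (x : X) (k : ℕ), (fun n => decide (x ∈ U k n)) ∈ Fr := by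
      intro x k
      have := hUγ k x
      rw [← Nat.cofinite_eq_atTop] at this
      have hfin : {n : ℕ | x ∉ U k n}.Finite := Filter.eventually_cofinite.mp this
      refine hfin.subset ?_
      intro n hn
      simp only [Set.mem_setOf_eq, decide_eq_false_iff_not] at hn ⊢
      exact hn
    set φ : X → ℕ → ↥Fr := fun x k => ⟨fun n => decide (x ∈ U k n), hFr x k⟩ with hφ
    have hlsc : LSC (fun x : X => {A : ℕ → ↥Fr |
        ∀ k, ∀ n, (A k : PN) n = true → (φ x k : PN) n = true}) := by
      intro V hV
      rw [isOpen_iff_forall_mem_open]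
      rintro x₀ ⟨A, hAΦ, hAV⟩
      have hAΦ' : ∀ k n, (A k : PN) n = true → x₀ ∈ U k n := by
        intro k n hn
        have := hAΦ k n hn
        simpa only [hφ, decide_eq_true_eq] using this
      obtain ⟨I, u, hu, hsub⟩ := isOpen_pi_iff.mp hV A hAV
      -- for each k ∈ I, get a finite set of coordinates determining membership in u k
      have hJ : ∀ k : ℕ, ∃ J : Finset ℕ, k ∈ I →
          ∀ B : ↥Fr, (∀ n ∈ J, (B : PN) n = (A k : PN) n) → B ∈ u k := by
        intro k
        by_cases hk : k ∈ I
        · obtain ⟨huo, hAu⟩ := hu k hk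
          obtain ⟨s, hso, hspre⟩ := isOpen_induced_iff.mp huo
          have hAs : (A k : PN) ∈ s := by rw [← hspre] at hAu; exact hAu
          obtain ⟨J, w, hw, hwsub⟩ := isOpen_pi_iff.mp hso (A k : PN) hAs
          refine ⟨J, fun _ B hB => ?_⟩
          have : (B : PN) ∈ s := by
            apply hwsub
            intro n hn
            rw [hB n hn]
            exact (hw n hn).2
          rw [← hspre]
          exact this
        · exact ⟨∅, fun hk' => absurd hk' hk⟩
      choose J hJ using hJ
      refine ⟨⋂ k ∈ I, ⋂ n ∈ J k, {x : X | (A k : PN) n = true → x ∈ U k n}, ?_, ?_, ?_⟩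
      · -- subset
        intro x hx
        simp only [Set.mem_iInter] at hx
        refine ⟨fun k => ⟨fun n => (A k : PN) n && decide (x ∈ U k n), ?_⟩, ?_, ?_⟩
        · -- in Fr
          have h1 : {n : ℕ | (A k : PN) n = false}.Finite := (A k).2
          have h2 := hFr x k
          refine (h1.union h2).subset ?_
          intro n hn
          simp only [Set.mem_setOf_eq, Bool.and_eq_false_iff] at hn
          rcases hn with hn | hn
          · exact Or.inl hn
          · exact Or.inr hn
        · -- in Φ x
          intro k n hn
          simp only [Bool.and_eq_true, decide_eq_true_eq] at hn
          simp only [hφ, Set.mem_setOf_eq, decide_eq_true_eq]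
          exact hn.2
        · -- in V
          apply hsub
          intro k hk
          simp only [Set.mem_pi] at *
          apply hJ k hk
          intro n hn
          simp only
          by_cases hA : (A k : PN) n = true
          · rw [hA]
            have hxU : x ∈ U k n := hx k hk n hn hA
            simp [hxU]
          · have : (A k : PN) n = false := Bool.eq_false_iff.mpr hA
            rw [this]
            simp
      · -- open
        apply isOpen_biInter_finset
        intro k _
        apply isOpen_biInter_finset
        intro n _
        by_cases hA : (A k : PN) n = true
        · have : {x : X | (A k : PN) n = true → x ∈ U k n} = U k n := by
            ext x; simp [hA]
          rw [this]; exact hUopen k n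
        · have : {x : X | (A k : PN) n = true → x ∈ U k n} = Set.univ := by
            ext x; simp [hA]
          rw [this]; exact isOpen_univ
      · -- x₀ ∈ O
        simp only [Set.mem_iInter, Set.mem_setOf_eq]
        intro k _ n _ hA
        exact hAΦ' k n hA
    obtain ⟨f, hf⟩ := h φ hlsc
    refine ⟨f, fun x => ?_⟩
    filter_upwards [hf x] with k hk
    simpa only [hφ, decide_eq_true_eq] using hk
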